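/- For even n ≥ 2 let R_n : ℝ^n → ℝ^n be the linear map acting on each consecutive pair of coordinates by (a, b) ↦ (a − b, a + b). Define the Barnes–Wall lattices recursively by BW₂ = ℤ² and BW_{2n} = {(u, v) ∈ BW_n × BW_n : u + v ∈ R_n(BW_n)} ⊆ ℝ^{2n}. Then for every m ≥ 1 and n = 2^m: (a) R_n(BW_n) ⊆ BW_n, so the recursion is a single parity-check construction; (b) the minimum distance satisfies d(BW_n) = n/2, i.e., d(BW_{2^m}) = 2^{m−1}; and (c) the fundamental coding gain satisfies γ(BW_n) = √(n/2). -/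

import Mathlib

open MeasureTheory

noncomputable section

/-- The scaling-rotation `R_N` acting on each consecutive pair of coordinates by
`(a, b) ↦ (a − b, a + b)`. -/
def Rmap {N : ℕ} (x : EuclideanSpace ℝ (Fin N)) : EuclideanSpace ℝ (Fin N) :=
  WithLp.toLp 2 fun i =>
    if _h : (i : ℕ) % 2 = 0 then
      x i - (if h' : (i : ℕ) + 1 < N then x ⟨(i : ℕ) + 1, h'⟩ else 0)
    else
      x ⟨(i : ℕ) - 1, Nat.lt_of_le_of_lt (Nat.sub_le _ _) i.isLt⟩ + x i

/-- Embedding of the first half of the coordinates. -/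
def lowIdx {m : ℕ} (i : Fin (2 ^ m)) : Fin (2 ^ (m + 1)) :=
  ⟨(i : ℕ), lt_of_lt_of_le i.isLt (Nat.pow_le_pow_right (by norm_num) (Nat.le_succ m))⟩

/-- Embedding of the second half of the coordinates. -/
def highIdx {m : ℕ} (i : Fin (2 ^ m)) : Fin (2 ^ (m + 1)) :=
  ⟨2 ^ m + (i : ℕ), by
    have h := i.isLt
    have h2 : 2 ^ (m + 1) = 2 ^ m + 2 ^ m := by rw [pow_succ, mul_two]
    omega⟩

/-- The Barnes–Wall lattices, defined recursively as single parity-check lattices: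
`BW 1 = ℤ²` and `BW (m+1) = {(u, v) : u, v ∈ BW m, u + v ∈ R(BW m)}`. -/
def BW : (m : ℕ) → Set (EuclideanSpace ℝ (Fin (2 ^ m)))
  | 0 => Set.univ
  | 1 => {x | ∀ i, ∃ z : ℤ, x i = (z : ℝ)}
  | (m + 2) => {x | ∃ u ∈ BW (m + 1), ∃ v ∈ BW (m + 1),
      (∀ i : Fin (2 ^ (m + 1)), x (lowIdx i) = u i ∧ x (highIdx i) = v i) ∧
      u + v ∈ Rmap '' (BW (m + 1))}

-- ### infrastructure

lemma two_pow_succ (m : ℕ) : 2 ^ (m + 1) = 2 ^ m + 2 ^ m := by rw [pow_succ, mul_two]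

abbrev Esp (m : ℕ) := EuclideanSpace ℝ (Fin (2 ^ m))

def splitE (m : ℕ) : Fin (2 ^ m) ⊕ Fin (2 ^ m) ≃ Fin (2 ^ (m + 1)) :=
  finSumFinEquiv.trans (finCongr (two_pow_succ m).symm)

@[simp] lemma splitE_inl {m : ℕ} (i : Fin (2 ^ m)) : splitE m (Sum.inl i) = lowIdx i := by
  apply Fin.ext; simp [splitE, lowIdx]

@[simp] lemma splitE_inr {m : ℕ} (i : Fin (2 ^ m)) : splitE m (Sum.inr i) = highIdx i := by
  apply Fin.ext; simp [splitE, highIdx]; omega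

def glue {m : ℕ} (u v : Esp m) : Esp (m + 1) :=
  WithLp.toLp 2 fun j => if h : (j : ℕ) < 2 ^ m then u ⟨j, h⟩ else
    v ⟨(j : ℕ) - 2 ^ m, by have := j.isLt; have h2 := two_pow_succ m; omega⟩

def lowPart {m : ℕ} (x : Esp (m + 1)) : Esp m := WithLp.toLp 2 fun i => x (lowIdx i)
def highPart {m : ℕ} (x : Esp (m + 1)) : Esp m := WithLp.toLp 2 fun i => x (highIdx i)

@[simp] lemma glue_low {m : ℕ} (u v : Esp m) (i : Fin (2 ^ m)) : glue u v (lowIdx i) = u i := by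
  simp [glue, lowIdx]

@[simp] lemma glue_high {m : ℕ} (u v : Esp m) (i : Fin (2 ^ m)) : glue u v (highIdx i) = v i := by
  have h : ¬ ((highIdx i : ℕ) < 2 ^ m) := by simp [highIdx]
  simp only [glue, PiLp.toLp_apply, dif_neg h]
  apply congrArg v.ofLp
  apply Fin.ext
  simp [highIdx]

@[simp] lemma lowPart_glue {m : ℕ} (u v : Esp m) : lowPart (glue u v) = u := by
  ext i; simp [lowPart]

@[simp] lemma highPart_glue {m : ℕ} (u v : Esp m) : highPart (glue u v) = v := by
  ext i; simp [highPart]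

lemma glue_lowPart_highPart {m : ℕ} (x : Esp (m + 1)) : glue (lowPart x) (highPart x) = x := by
  ext j
  obtain ⟨s, rfl⟩ := (splitE m).surjective j
  cases s with
  | inl i => rw [splitE_inl, glue_low]; rfl
  | inr i => rw [splitE_inr, glue_high]; rfl

lemma glue_add {m : ℕ} (u v u' v' : Esp m) :
    glue (u + u') (v + v') = glue u v + glue u' v' := by
  ext j
  show _ = glue u v j + glue u' v' j
  simp only [glue]
  split_ifs <;> rfl

lemma glue_neg {m : ℕ} (u v : Esp m) : glue (-u) (-v) = -(glue u v) := by
  ext j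
  show _ = -(glue u v j)
  simp only [glue]
  split_ifs <;> rfl

lemma glue_zero {m : ℕ} : glue (0 : Esp m) 0 = 0 := by
  ext j
  show _ = (0:ℝ)
  simp only [glue]
  split_ifs <;> rfl

lemma glue_smul {m : ℕ} (c : ℝ) (u v : Esp m) : glue (c • u) (c • v) = c • glue u v := by
  ext j
  show _ = c • (glue u v j)
  simp only [glue]
  split_ifs <;> rfl

-- ### Rmap lemmas

lemma Rmap_add {N : ℕ} (x y : EuclideanSpace ℝ (Fin N)) :
    Rmap (x + y) = Rmap x + Rmap y := by
  ext i
  show _ = Rmap x i + Rmap y i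
  simp only [Rmap, PiLp.toLp_apply]
  have hxy : ∀ j : Fin N, (x + y) j = x j + y j := fun _ => rfl
  split_ifs <;> simp [hxy] <;> ring

lemma Rmap_neg {N : ℕ} (x : EuclideanSpace ℝ (Fin N)) : Rmap (-x) = -(Rmap x) := by
  ext i
  show _ = -(Rmap x i)
  simp only [Rmap, PiLp.toLp_apply]
  have hx : ∀ j : Fin N, (-x) j = -(x j) := fun _ => rfl
  split_ifs <;> simp [hx] <;> ring

lemma Rmap_zero {N : ℕ} : Rmap (0 : EuclideanSpace ℝ (Fin N)) = 0 := by
  ext i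
  show _ = (0:ℝ)
  simp only [Rmap, PiLp.toLp_apply]
  have hx : ∀ j : Fin N, (0 : EuclideanSpace ℝ (Fin N)) j = 0 := fun _ => rfl
  split_ifs <;> simp [hx]

lemma Rmap_smul {N : ℕ} (c : ℝ) (x : EuclideanSpace ℝ (Fin N)) :
    Rmap (c • x) = c • Rmap x := by
  ext i
  show _ = c • (Rmap x i)
  simp only [Rmap, PiLp.toLp_apply]
  have hx : ∀ j : Fin N, (c • x) j = c * x j := fun _ => rfl
  split_ifs <;> simp [hx] <;> ring

/-- `Rmap` on a glued vector acts on each half separately (halves have even length). -/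
lemma Rmap_glue {m : ℕ} (hm : 1 ≤ m) (u v : Esp m) :
    Rmap (glue u v) = glue (Rmap u) (Rmap v) := by
  have hev : 2 ^ m % 2 = 0 := by
    rcases Nat.exists_eq_add_of_le hm with ⟨k, rfl⟩
    simp [pow_add, pow_succ, Nat.mul_mod_left, Nat.mul_mod]
  ext j
  obtain ⟨s, rfl⟩ := (splitE m).surjective j
  have key : ∀ (i : Fin (2 ^ m)), (i : ℕ) % 2 = 0 → (i : ℕ) + 1 < 2 ^ m := by
    intro i hi
    have := i.isLt
    omega
  cases s with
  | inl i =>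
    rw [splitE_inl, glue_low]
    by_cases hp : (i : ℕ) % 2 = 0
    · have h1 : ((lowIdx i : Fin (2 ^ (m+1))) : ℕ) % 2 = 0 := hp
      have hi1 : (i : ℕ) + 1 < 2 ^ m := key i hp
      have hi1' : ((lowIdx i : Fin (2 ^ (m+1))) : ℕ) + 1 < 2 ^ (m + 1) := by
        show (i : ℕ) + 1 < 2 ^ (m + 1); have := two_pow_succ m; omega
      simp only [Rmap, PiLp.toLp_apply]; rw [dif_pos h1, dif_pos hp, dif_pos hi1', dif_pos hi1]
      have : (⟨(lowIdx i : ℕ) + 1, hi1'⟩ : Fin (2 ^ (m+1))) = lowIdx ⟨(i:ℕ)+1, hi1⟩ := rfl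
      rw [this, glue_low, glue_low]
    · have h1 : ¬ ((lowIdx i : Fin (2 ^ (m+1))) : ℕ) % 2 = 0 := hp
      simp only [Rmap, PiLp.toLp_apply]; rw [dif_neg h1, dif_neg hp]
      have h2 : (⟨((lowIdx i : Fin (2^(m+1))) : ℕ) - 1, _⟩ : Fin (2 ^ (m+1))) =
          lowIdx ⟨(i:ℕ) - 1, Nat.lt_of_le_of_lt (Nat.sub_le _ _) i.isLt⟩ := rfl
      rw [h2, glue_low, glue_low]
  | inr i =>
    rw [splitE_inr, glue_high]
    have hval : ((highIdx i : Fin (2 ^ (m+1))) : ℕ) = 2 ^ m + (i : ℕ) := rfl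
    by_cases hp : (i : ℕ) % 2 = 0
    · have h1 : ((highIdx i : Fin (2 ^ (m+1))) : ℕ) % 2 = 0 := by
        rw [hval]; omega
      have hi1 : (i : ℕ) + 1 < 2 ^ m := key i hp
      have hi1' : ((highIdx i : Fin (2 ^ (m+1))) : ℕ) + 1 < 2 ^ (m + 1) := by
        rw [hval]; have := two_pow_succ m; omega
      simp only [Rmap, PiLp.toLp_apply]; rw [dif_pos h1, dif_pos hp, dif_pos hi1', dif_pos hi1]
      have : (⟨((highIdx i : Fin (2^(m+1))) : ℕ) + 1, hi1'⟩ : Fin (2 ^ (m+1))) =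
          highIdx ⟨(i:ℕ)+1, hi1⟩ := by
        apply Fin.ext; simp [highIdx, hval]; omega
      rw [this, glue_high, glue_high]
    · have h1 : ¬ ((highIdx i : Fin (2 ^ (m+1))) : ℕ) % 2 = 0 := by
        rw [hval]; omega
      simp only [Rmap, PiLp.toLp_apply]; rw [dif_neg h1, dif_neg hp]
      have hipos : 1 ≤ (i : ℕ) := by omega
      have : (⟨((highIdx i : Fin (2^(m+1))) : ℕ) - 1,
          Nat.lt_of_le_of_lt (Nat.sub_le _ _) (highIdx i).isLt⟩ : Fin (2 ^ (m+1))) =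
          highIdx ⟨(i:ℕ) - 1, Nat.lt_of_le_of_lt (Nat.sub_le _ _) i.isLt⟩ := by
        apply Fin.ext; simp [highIdx, hval]; omega
      rw [this, glue_high, glue_high]

-- ### sum of squares

def Qf {N : ℕ} (x : EuclideanSpace ℝ (Fin N)) : ℝ := ∑ i, (x i) ^ 2

lemma norm_sq_eq_Qf {N : ℕ} (x : EuclideanSpace ℝ (Fin N)) : ‖x‖ ^ 2 = Qf x := by
  rw [EuclideanSpace.norm_eq, Real.sq_sqrt (by positivity)]
  simp [Qf, sq_abs]

lemma Qf_nonneg {N : ℕ} (x : EuclideanSpace ℝ (Fin N)) : 0 ≤ Qf x :=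
  Finset.sum_nonneg fun _ _ => sq_nonneg _

lemma Qf_eq_zero_iff {N : ℕ} (x : EuclideanSpace ℝ (Fin N)) : Qf x = 0 ↔ x = 0 := by
  constructor
  · intro h
    ext i
    have := (Finset.sum_eq_zero_iff_of_nonneg (fun j _ => sq_nonneg (x j))).mp h i
      (Finset.mem_univ i)
    have : x i = 0 := by nlinarith [this]
    exact this
  · rintro rfl
    unfold Qf
    apply Finset.sum_eq_zero
    intro i _
    show (0:ℝ)^2 = 0
    simp

lemma Qf_glue {m : ℕ} (u v : Esp m) : Qf (glue u v) = Qf u + Qf v := by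
  unfold Qf
  rw [← Equiv.sum_comp (splitE m) (fun j => (glue u v j) ^ 2), Fintype.sum_sum_type]
  congr 1
  · apply Finset.sum_congr rfl; intro i _; rw [splitE_inl, glue_low]
  · apply Finset.sum_congr rfl; intro i _; rw [splitE_inr, glue_high]

lemma fin2cases (j : Fin (2 ^ 1)) : j = ⟨0, by norm_num⟩ ∨ j = ⟨1, by norm_num⟩ := by
  have := j.isLt
  have h2 : (j : ℕ) < 2 := by simpa using this
  rcases (by omega : (j : ℕ) = 0 ∨ (j : ℕ) = 1) with h | h
  · left; exact Fin.ext h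
  · right; exact Fin.ext h

lemma Rmap_base_zero (x : Esp 1) :
    Rmap x ⟨0, by norm_num⟩ = x ⟨0, by norm_num⟩ - x ⟨1, by norm_num⟩ := by
  have h : ((⟨0, by norm_num⟩ : Fin (2^1)) : ℕ) % 2 = 0 := rfl
  have h' : ((⟨0, by norm_num⟩ : Fin (2^1)) : ℕ) + 1 < 2 ^ 1 := by norm_num
  rw [Rmap, PiLp.toLp_apply, dif_pos h, dif_pos h']

lemma Rmap_base_one (x : Esp 1) :
    Rmap x ⟨1, by norm_num⟩ = x ⟨0, by norm_num⟩ + x ⟨1, by norm_num⟩ := by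
  have h : ¬ ((⟨1, by norm_num⟩ : Fin (2^1)) : ℕ) % 2 = 0 := by norm_num
  rw [Rmap, PiLp.toLp_apply, dif_neg h]
  rfl

lemma Qf_base (x : Esp 1) : Qf x = x ⟨0, by norm_num⟩ ^ 2 + x ⟨1, by norm_num⟩ ^ 2 := by
  unfold Qf
  rw [show (Finset.univ : Finset (Fin (2^1))) = {⟨0, by norm_num⟩, ⟨1, by norm_num⟩} from by
    ext j; rcases fin2cases j with rfl | rfl <;> simp]
  rw [Finset.sum_insert (by simp), Finset.sum_singleton]

lemma Qf_Rmap {m : ℕ} (hm : 1 ≤ m) (x : Esp m) : Qf (Rmap x) = 2 * Qf x := by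
  induction m with
  | zero => omega
  | succ k ih =>
    rcases Nat.eq_or_lt_of_le hm with h1 | h2
    · -- k + 1 = 1
      have hk : k = 0 := by omega
      subst hk
      rw [Qf_base, Qf_base, Rmap_base_zero, Rmap_base_one]
      ring
    · have hk : 1 ≤ k := by omega
      have hx := glue_lowPart_highPart x
      rw [← hx, Rmap_glue hk, Qf_glue, Qf_glue, ih hk, ih hk]
      ring

lemma Rmap_injective {m : ℕ} (hm : 1 ≤ m) {x : Esp m} (h : Rmap x = 0) : x = 0 := by
  have := Qf_Rmap hm x
  rw [h, (Qf_eq_zero_iff _).mpr rfl] at this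
  have : Qf x = 0 := by linarith
  exact (Qf_eq_zero_iff x).mp this

-- ### linear maps and basis family

def myEval {N : ℕ} (j : Fin N) : EuclideanSpace ℝ (Fin N) →ₗ[ℝ] ℝ where
  toFun x := x j
  map_add' _ _ := rfl
  map_smul' _ _ := rfl

def lowL {m : ℕ} : Esp (m + 1) →ₗ[ℝ] Esp m where
  toFun := lowPart
  map_add' _ _ := rfl
  map_smul' _ _ := rfl

def highL {m : ℕ} : Esp (m + 1) →ₗ[ℝ] Esp m where
  toFun := highPart
  map_add' _ _ := rfl
  map_smul' _ _ := rfl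

def RmapL (m : ℕ) : Esp m →ₗ[ℝ] Esp m where
  toFun := Rmap
  map_add' := Rmap_add
  map_smul' := Rmap_smul

def bas : (m : ℕ) → Fin (2 ^ m) → Esp m
  | 0 => fun _ => 0
  | 1 => fun i => (WithLp.toLp 2 (fun j => if i = j then 1 else 0) : Esp 1)
  | (m + 2) => fun k =>
      Sum.elim (fun j => glue (bas (m + 1) j) (-(bas (m + 1) j)))
               (fun j => glue 0 (Rmap (bas (m + 1) j))) ((splitE (m + 1)).symm k)

lemma bas_low {m : ℕ} (j : Fin (2 ^ (m + 1))) :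
    bas (m + 2) (lowIdx j) = glue (bas (m + 1) j) (-(bas (m + 1) j)) := by
  show Sum.elim _ _ ((splitE (m + 1)).symm (lowIdx j)) = _
  rw [← splitE_inl, Equiv.symm_apply_apply]
  rfl

lemma bas_high {m : ℕ} (j : Fin (2 ^ (m + 1))) :
    bas (m + 2) (highIdx j) = glue 0 (Rmap (bas (m + 1) j)) := by
  show Sum.elim _ _ ((splitE (m + 1)).symm (highIdx j)) = _
  rw [← splitE_inr, Equiv.symm_apply_apply]
  rfl

lemma mem_BW_succ {m : ℕ} (x : Esp (m + 2)) :
    x ∈ BW (m + 2) ↔ lowPart x ∈ BW (m + 1) ∧ highPart x ∈ BW (m + 1) ∧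
      lowPart x + highPart x ∈ Rmap '' (BW (m + 1)) := by
  constructor
  · rintro ⟨u, hu, v, hv, hcoord, hR⟩
    have h1 : lowPart x = u := PiLp.ext fun i => (hcoord i).1
    have h2 : highPart x = v := PiLp.ext fun i => (hcoord i).2
    rw [h1, h2]; exact ⟨hu, hv, hR⟩
  · rintro ⟨h1, h2, h3⟩
    exact ⟨lowPart x, h1, highPart x, h2, fun i => ⟨rfl, rfl⟩, h3⟩

lemma mem_BW_one (x : Esp 1) : x ∈ BW 1 ↔ ∀ i, ∃ z : ℤ, x i = (z : ℝ) := Iff.rfl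

lemma Qf_neg {N : ℕ} (x : EuclideanSpace ℝ (Fin N)) : Qf (-x) = Qf x := by
  unfold Qf
  apply Finset.sum_congr rfl
  intro i _
  show (-(x i)) ^ 2 = _
  ring

lemma sum_apply' {N K : ℕ} (f : Fin K → EuclideanSpace ℝ (Fin N)) (j : Fin N) :
    (∑ i, f i) j = ∑ i, f i j := by
  have := map_sum (myEval j) f Finset.univ
  exact this

-- base case lemmas

lemma bw_one_zero : (0 : Esp 1) ∈ BW 1 := fun i => ⟨0, by push_cast; rfl⟩

lemma bw_one_add {x y : Esp 1} (hx : x ∈ BW 1) (hy : y ∈ BW 1) : x + y ∈ BW 1 := by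
  intro i
  obtain ⟨a, ha⟩ := hx i
  obtain ⟨b, hb⟩ := hy i
  exact ⟨a + b, by push_cast [← ha, ← hb]; rfl⟩

lemma bw_one_neg {x : Esp 1} (hx : x ∈ BW 1) : -x ∈ BW 1 := by
  intro i
  obtain ⟨a, ha⟩ := hx i
  exact ⟨-a, by push_cast [← ha]; rfl⟩

lemma bas_one_mem (i : Fin (2 ^ 1)) : bas 1 i ∈ BW 1 := by
  intro j
  by_cases h : i = j
  · exact ⟨1, by simp [bas, h]⟩
  · exact ⟨0, by simp [bas, h]⟩

lemma span_bas_one : (Submodule.span ℤ (Set.range (bas 1)) : Set (Esp 1)) = BW 1 := by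
  apply Set.Subset.antisymm
  · intro x hx
    induction hx using Submodule.span_induction with
    | mem y hy => obtain ⟨i, rfl⟩ := hy; exact bas_one_mem i
    | zero => exact bw_one_zero
    | add a b _ _ ha hb => exact bw_one_add ha hb
    | smul z a _ ha =>
      intro i
      obtain ⟨w, hw⟩ := ha i
      refine ⟨z * w, ?_⟩
      show z • (a i) = _
      rw [hw]
      push_cast [zsmul_eq_mul]
      ring
  · intro x hx
    choose z hz using hx
    have hxe : x = ∑ i, (z i) • bas 1 i := by
      ext j
      rw [sum_apply' (fun i => (z i) • bas 1 i) j]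
      have : ∀ i, ((z i) • bas 1 i) j = (z i : ℝ) * (if i = j then 1 else 0) := by
        intro i
        show (z i) • (bas 1 i j) = _
        simp [bas]
      rw [Finset.sum_congr rfl (fun i _ => this i)]
      simp only [mul_ite, mul_one, mul_zero]
      rw [Finset.sum_ite_eq' Finset.univ j (fun i => (z i : ℝ))]
      simp [hz j]
    rw [hxe]
    exact Submodule.sum_mem _ fun i _ =>
      Submodule.smul_mem _ (z i) (Submodule.subset_span (Set.mem_range_self i))

lemma linInd_bas_one : LinearIndependent ℝ (bas 1) := by
  rw [Fintype.linearIndependent_iff]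
  intro g hg j
  have := congrArg (fun v => v j) hg
  rw [sum_apply' (fun i => g i • bas 1 i) j] at this
  have h2 : ∀ i, (g i • bas 1 i) j = g i * (if i = j then 1 else 0) := fun i => rfl
  rw [Finset.sum_congr rfl (fun i _ => h2 i)] at this
  simp only [mul_ite, mul_one, mul_zero] at this
  rw [Finset.sum_ite_eq' Finset.univ j g] at this
  simpa using this

lemma rmap_bw_one {x : Esp 1} (hx : x ∈ BW 1) : Rmap x ∈ BW 1 := by
  obtain ⟨a, ha⟩ := hx ⟨0, by norm_num⟩
  obtain ⟨b, hb⟩ := hx ⟨1, by norm_num⟩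
  intro i
  rcases fin2cases i with rfl | rfl
  · exact ⟨a - b, by rw [Rmap_base_zero, ha, hb]; push_cast; ring⟩
  · exact ⟨a + b, by rw [Rmap_base_one, ha, hb]; push_cast; ring⟩

lemma least_bw_one : IsLeast {d : ℝ | ∃ x ∈ BW 1, x ≠ 0 ∧ Qf x = d} ((2 : ℝ) ^ 0) := by
  constructor
  · refine ⟨bas 1 ⟨0, by norm_num⟩, bas_one_mem _, ?_, ?_⟩
    · intro h
      have h0 := congrArg (fun v => v ⟨0, by norm_num⟩) h
      have : (1:ℝ) = 0 := by simpa [bas] using h0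
      norm_num at this
    · rw [Qf_base]
      simp [bas]
  · rintro d ⟨x, hx, hne, rfl⟩
    obtain ⟨a, ha⟩ := hx ⟨0, by norm_num⟩
    obtain ⟨b, hb⟩ := hx ⟨1, by norm_num⟩
    have hab : a ≠ 0 ∨ b ≠ 0 := by
      by_contra h
      push_neg at h
      apply hne
      ext j
      rcases fin2cases j with rfl | rfl
      · rw [ha, h.1]; norm_num
      · rw [hb, h.2]; norm_num
    rw [Qf_base, ha, hb]
    have key : ∀ z : ℤ, z ≠ 0 → (1 : ℝ) ≤ (z : ℝ) ^ 2 := by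
      intro z hz
      have h1 : (1 : ℤ) ≤ z ^ 2 := by nlinarith [sq_nonneg z, Int.one_le_abs hz, sq_abs z]
      calc (1:ℝ) = ((1:ℤ):ℝ) := by norm_num
        _ ≤ ((z ^ 2 : ℤ) : ℝ) := by exact_mod_cast h1
        _ = (z:ℝ) ^ 2 := by push_cast; ring
    rcases hab with h | h
    · nlinarith [key a h, sq_nonneg (b:ℝ)]
    · nlinarith [key b h, sq_nonneg (a:ℝ)]

-- ### determinant machinery

def famMat {m : ℕ} (v : Fin (2 ^ m) → Esp m) : Matrix (Fin (2 ^ m)) (Fin (2 ^ m)) ℝ :=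
  Matrix.of fun i j => v j i

def stdB (m : ℕ) : Module.Basis (Fin (2 ^ m)) ℝ (Esp m) :=
  (EuclideanSpace.basisFun (Fin (2 ^ m)) ℝ).toBasis

lemma stdB_det_eq {m : ℕ} (v : Fin (2 ^ m) → Esp m) :
    (stdB m).det v = (famMat v).det := by
  rw [Module.Basis.det_apply]
  congr 1

lemma hrepr {m : ℕ} (x : Esp m) (k : Fin (2 ^ m)) : (stdB m).repr x k = x k := by
  rw [stdB, OrthonormalBasis.coe_toBasis_repr_apply, EuclideanSpace.basisFun_repr]

/-- The matrix of a "combined" family is a block matrix. -/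
lemma famMat_comb_det {m : ℕ} (F : Fin (2 ^ (m + 1)) → Esp (m + 1))
    (a b c d : Fin (2 ^ m) → Esp m)
    (hl : ∀ j, F (lowIdx j) = glue (a j) (c j))
    (hh : ∀ j, F (highIdx j) = glue (b j) (d j)) :
    (famMat F).det = (Matrix.fromBlocks (famMat a) (famMat b) (famMat c) (famMat d)).det := by
  rw [← Matrix.det_submatrix_equiv_self (splitE m)]
  congr 1
  ext s t
  cases s with
  | inl i =>
    cases t with
    | inl j =>
      show famMat F (splitE m (Sum.inl i)) (splitE m (Sum.inl j)) = famMat a i j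
      rw [splitE_inl, splitE_inl]
      show F (lowIdx j) (lowIdx i) = a j i
      rw [hl, glue_low]
    | inr j =>
      show famMat F (splitE m (Sum.inl i)) (splitE m (Sum.inr j)) = famMat b i j
      rw [splitE_inl, splitE_inr]
      show F (highIdx j) (lowIdx i) = b j i
      rw [hh, glue_low]
  | inr i =>
    cases t with
    | inl j =>
      show famMat F (splitE m (Sum.inr i)) (splitE m (Sum.inl j)) = famMat c i j
      rw [splitE_inr, splitE_inl]
      show F (lowIdx j) (highIdx i) = c j i
      rw [hl, glue_high]
    | inr j =>
      show famMat F (splitE m (Sum.inr i)) (splitE m (Sum.inr j)) = famMat d i j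
      rw [splitE_inr, splitE_inr]
      show F (highIdx j) (highIdx i) = d j i
      rw [hh, glue_high]

lemma famMat_Rmap {m : ℕ} (v : Fin (2 ^ m) → Esp m) :
    famMat (fun j => Rmap (v j)) =
      (LinearMap.toMatrix (stdB m) (stdB m) (RmapL m)) * famMat v := by
  ext i j
  rw [Matrix.mul_apply]
  calc famMat (fun j => Rmap (v j)) i j = Rmap (v j) i := rfl
    _ = (stdB m).repr (RmapL m (v j)) i := (hrepr _ _).symm
    _ = ((LinearMap.toMatrix (stdB m) (stdB m) (RmapL m)).mulVec
          ((stdB m).repr (v j))) i :=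
        (congrFun (LinearMap.toMatrix_mulVec_repr (stdB m) (stdB m) (RmapL m) (v j)) i).symm
    _ = ∑ k, LinearMap.toMatrix (stdB m) (stdB m) (RmapL m) i k * (stdB m).repr (v j) k := rfl
    _ = ∑ k, LinearMap.toMatrix (stdB m) (stdB m) (RmapL m) i k * famMat v k j := by
        refine Finset.sum_congr rfl fun k _ => ?_
        rw [hrepr]
        rfl

lemma famMat_det_Rmap {m : ℕ} (v : Fin (2 ^ m) → Esp m) :
    (famMat (fun j => Rmap (v j))).det = LinearMap.det (RmapL m) * (famMat v).det := by
  rw [famMat_Rmap, Matrix.det_mul, ← LinearMap.det_toMatrix (stdB m) (RmapL m)]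

lemma stdB_glue_low {m : ℕ} (j : Fin (2 ^ m)) :
    stdB (m + 1) (lowIdx j) = glue (stdB m j) 0 := by
  ext i
  obtain ⟨s, rfl⟩ := (splitE m).surjective i
  have hb : ∀ (M : ℕ) (a b : Fin (2 ^ M)), stdB M a b = if b = a then (1:ℝ) else 0 := by
    intro M a b
    show (EuclideanSpace.basisFun (Fin (2 ^ M)) ℝ).toBasis a b = _
    rw [OrthonormalBasis.coe_toBasis, EuclideanSpace.basisFun_apply]
    exact EuclideanSpace.single_apply a 1 b
  cases s with
  | inl i =>
    rw [splitE_inl, glue_low, hb, hb]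
    have : lowIdx i = lowIdx j ↔ i = j := by
      constructor
      · intro h
        have h2 := congrArg Fin.val h
        simp only [lowIdx] at h2
        exact Fin.ext h2
      · rintro rfl; rfl
    simp [this]
  | inr i =>
    rw [splitE_inr, glue_high, hb]
    have : ¬ (highIdx i = lowIdx j) := by
      intro h
      have := congrArg Fin.val h
      simp [highIdx, lowIdx] at this
      have := j.isLt
      omega
    simp [this]

lemma stdB_glue_high {m : ℕ} (j : Fin (2 ^ m)) :
    stdB (m + 1) (highIdx j) = glue 0 (stdB m j) := by
  ext i
  obtain ⟨s, rfl⟩ := (splitE m).surjective i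
  have hb : ∀ (M : ℕ) (a b : Fin (2 ^ M)), stdB M a b = if b = a then (1:ℝ) else 0 := by
    intro M a b
    show (EuclideanSpace.basisFun (Fin (2 ^ M)) ℝ).toBasis a b = _
    rw [OrthonormalBasis.coe_toBasis, EuclideanSpace.basisFun_apply]
    exact EuclideanSpace.single_apply a 1 b
  cases s with
  | inl i =>
    rw [splitE_inl, glue_low, hb]
    have : ¬ (lowIdx i = highIdx j) := by
      intro h
      have := congrArg Fin.val h
      simp [highIdx, lowIdx] at this
      have := i.isLt
      omega
    simp [this]
  | inr i =>
    rw [splitE_inr, glue_high, hb, hb]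
    have : highIdx i = highIdx j ↔ i = j := by
      constructor
      · intro h
        have := congrArg Fin.val h
        simp [highIdx] at this
        exact Fin.ext this
      · rintro rfl; rfl
    simp [this]

lemma stdB_apply {M : ℕ} (a b : Fin (2 ^ M)) : stdB M a b = if b = a then (1:ℝ) else 0 := by
  show (EuclideanSpace.basisFun (Fin (2 ^ M)) ℝ).toBasis a b = _
  rw [OrthonormalBasis.coe_toBasis, EuclideanSpace.basisFun_apply]
  exact EuclideanSpace.single_apply a 1 b

lemma toMatrix_RmapL_eq {m : ℕ} :
    LinearMap.toMatrix (stdB m) (stdB m) (RmapL m) = famMat (fun j => Rmap (stdB m j)) := by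
  ext i j
  rw [LinearMap.toMatrix_apply, hrepr]
  rfl

lemma rdet_base : LinearMap.det (RmapL 1) = 2 := by
  rw [← LinearMap.det_toMatrix (stdB 1), toMatrix_RmapL_eq]
  set M := famMat (fun j => Rmap (stdB 1 j)) with hM
  have hdet : M.det = M 0 0 * M 1 1 - M 0 1 * M 1 0 := Matrix.det_fin_two M
  have e0 : (0 : Fin (2 ^ 1)) = ⟨0, by norm_num⟩ := Fin.ext (by simp)
  have e1 : (1 : Fin (2 ^ 1)) = ⟨1, by norm_num⟩ := Fin.ext (by simp)
  have hentry : ∀ i j : Fin (2 ^ 1), M i j = Rmap (stdB 1 j) i := fun _ _ => rfl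
  rw [hdet, hentry, hentry, hentry, hentry, e0, e1, Rmap_base_zero, Rmap_base_zero,
    Rmap_base_one, Rmap_base_one]
  simp only [stdB_apply, Fin.ext_iff]
  norm_num

lemma rdet_succ (m : ℕ) :
    LinearMap.det (RmapL (m + 2)) = (LinearMap.det (RmapL (m + 1))) ^ 2 := by
  rw [← LinearMap.det_toMatrix (stdB (m + 2)), toMatrix_RmapL_eq]
  rw [famMat_comb_det (fun j => Rmap (stdB (m + 2) j))
      (fun j => Rmap (stdB (m + 1) j)) (fun _ => 0) (fun _ => 0)
      (fun j => Rmap (stdB (m + 1) j))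
      (fun j => by
        show Rmap (stdB (m + 2) (lowIdx j)) = glue (Rmap (stdB (m + 1) j)) 0
        rw [stdB_glue_low, Rmap_glue (by omega : 1 ≤ m + 1), Rmap_zero])
      (fun j => by
        show Rmap (stdB (m + 2) (highIdx j)) = glue 0 (Rmap (stdB (m + 1) j))
        rw [stdB_glue_high, Rmap_glue (by omega : 1 ≤ m + 1), Rmap_zero])]
  have hz : famMat (fun _ : Fin (2 ^ (m + 1)) => (0 : Esp (m + 1))) = 0 := by
    ext i j; rfl
  rw [hz, Matrix.det_fromBlocks_zero₁₂, ← toMatrix_RmapL_eq, LinearMap.det_toMatrix]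
  ring

lemma rdet_val : ∀ k : ℕ, LinearMap.det (RmapL (k + 1)) = 2 ^ (2 ^ k) := by
  intro k
  induction k with
  | zero => simpa using rdet_base
  | succ n ih =>
    rw [rdet_succ, ih, ← pow_mul, two_pow_succ (n)]
    ring

-- ### glue maps as ℤ-linear maps

def T1 (m : ℕ) : Esp m →ₗ[ℤ] Esp (m + 1) :=
  (AddMonoidHom.mk' (fun u => glue u (-u)) (fun a b => by
    show glue (a + b) (-(a + b)) = glue a (-a) + glue b (-b)
    rw [neg_add, glue_add])).toIntLinearMap

def T2 (m : ℕ) : Esp m →ₗ[ℤ] Esp (m + 1) :=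
  (AddMonoidHom.mk' (fun w => glue 0 (Rmap w)) (fun a b => by
    show glue 0 (Rmap (a + b)) = glue 0 (Rmap a) + glue 0 (Rmap b)
    rw [Rmap_add, ← glue_add, zero_add])).toIntLinearMap

@[simp] lemma T1_apply {m : ℕ} (u : Esp m) : T1 m u = glue u (-u) := rfl
@[simp] lemma T2_apply {m : ℕ} (w : Esp m) : T2 m w = glue 0 (Rmap w) := rfl

lemma sum_split {m : ℕ} {M : Type*} [AddCommMonoid M] (f : Fin (2 ^ (m + 1)) → M) :
    ∑ k, f k = (∑ j, f (lowIdx j)) + ∑ j, f (highIdx j) := by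
  rw [← Equiv.sum_comp (splitE m) f, Fintype.sum_sum_type]
  congr 1

lemma lowPart_add {m : ℕ} (x y : Esp (m + 1)) :
    lowPart (x + y) = lowPart x + lowPart y := rfl
lemma highPart_add {m : ℕ} (x y : Esp (m + 1)) :
    highPart (x + y) = highPart x + highPart y := rfl

lemma exp_arith (n : ℕ) :
    n * 2 ^ (n - 1) + (2 ^ n + n * 2 ^ (n - 1)) = (n + 1) * 2 ^ n := by
  rcases n with _ | s
  · norm_num
  · simp only [Nat.add_sub_cancel]
    rw [pow_succ]
    ring

theorem bigIH : ∀ k : ℕ,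
    ((Submodule.span ℤ (Set.range (bas (k + 1))) : Set (Esp (k + 1))) = BW (k + 1)) ∧
    LinearIndependent ℝ (bas (k + 1)) ∧
    (∀ x ∈ BW (k + 1), Rmap x ∈ BW (k + 1)) ∧
    IsLeast {d : ℝ | ∃ x ∈ BW (k + 1), x ≠ 0 ∧ Qf x = d} ((2 : ℝ) ^ k) ∧
    |(stdB (k + 1)).det (bas (k + 1))| = 2 ^ (k * 2 ^ (k - 1)) := by
  intro k
  induction k with
  | zero =>
    refine ⟨span_bas_one, linInd_bas_one, fun x hx => rmap_bw_one hx, least_bw_one, ?_⟩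
    have h1 : famMat (bas 1) = 1 := by
      ext i j
      show bas 1 j i = (1 : Matrix (Fin (2^1)) (Fin (2^1)) ℝ) i j
      rw [Matrix.one_apply]
      simp [bas, eq_comm]
    rw [stdB_det_eq, h1, Matrix.det_one]
    norm_num
  | succ n ih =>
    obtain ⟨ihspan, ihind, ihR, ihleast, ihdet⟩ := ih
    set S := Submodule.span ℤ (Set.range (bas (n + 1))) with hS
    set B := bas (n + 1) with hB
    have hmem : ∀ y : Esp (n + 1), y ∈ BW (n + 1) ↔ y ∈ S := fun y => by
      rw [← ihspan]; exact Iff.rfl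
    have h0BW : (0 : Esp (n + 1)) ∈ BW (n + 1) := (hmem 0).mpr S.zero_mem
    have hnegBW : ∀ {y : Esp (n + 1)}, y ∈ BW (n + 1) → -y ∈ BW (n + 1) := fun hy =>
      (hmem _).mpr (S.neg_mem ((hmem _).mp hy))
    have haddBW : ∀ {y z : Esp (n + 1)}, y ∈ BW (n + 1) → z ∈ BW (n + 1) →
        y + z ∈ BW (n + 1) := fun hy hz =>
      (hmem _).mpr (S.add_mem ((hmem _).mp hy) ((hmem _).mp hz))
    -- part (a) : Rmap preserves BW (n+2)
    have hRnew : ∀ x ∈ BW (n + 2), Rmap x ∈ BW (n + 2) := by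
      intro x hx
      obtain ⟨hu, hv, w, hw, hRw⟩ := (mem_BW_succ x).mp hx
      have hxg : Rmap x = glue (Rmap (lowPart x)) (Rmap (highPart x)) := by
        conv_lhs => rw [← glue_lowPart_highPart x]
        rw [Rmap_glue (by omega : 1 ≤ n + 1)]
      apply (mem_BW_succ _).mpr
      rw [hxg, lowPart_glue, highPart_glue]
      refine ⟨ihR _ hu, ihR _ hv, ⟨Rmap w, ihR _ hw, ?_⟩⟩
      rw [← Rmap_add, hRw]
    -- generators are in BW (n+2)
    have hgen1 : ∀ j, bas (n + 2) (lowIdx j) ∈ BW (n + 2) := by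
      intro j
      apply (mem_BW_succ _).mpr
      rw [bas_low, lowPart_glue, highPart_glue]
      have hBj : B j ∈ BW (n + 1) := (hmem _).mpr (Submodule.subset_span ⟨j, rfl⟩)
      exact ⟨hBj, hnegBW hBj, ⟨0, h0BW, by rw [Rmap_zero, add_neg_cancel]⟩⟩
    have hgen2 : ∀ j, bas (n + 2) (highIdx j) ∈ BW (n + 2) := by
      intro j
      apply (mem_BW_succ _).mpr
      rw [bas_high, lowPart_glue, highPart_glue]
      have hBj : B j ∈ BW (n + 1) := (hmem _).mpr (Submodule.subset_span ⟨j, rfl⟩)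
      exact ⟨h0BW, ihR _ hBj, ⟨B j, hBj, by rw [zero_add]⟩⟩
    -- BW (n+2) is an additive subgroup
    have hzero2 : (0 : Esp (n + 2)) ∈ BW (n + 2) := by
      apply (mem_BW_succ _).mpr
      refine ⟨h0BW, h0BW, ⟨0, h0BW, ?_⟩⟩
      rw [Rmap_zero]
      show (0 : Esp (n+1)) = lowPart 0 + highPart 0
      ext i
      show (0:ℝ) = 0 + 0
      norm_num
    have hadd2 : ∀ {x y : Esp (n + 2)}, x ∈ BW (n + 2) → y ∈ BW (n + 2) →
        x + y ∈ BW (n + 2) := by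
      intro x y hx hy
      obtain ⟨hux, hvx, wx, hwx, hRwx⟩ := (mem_BW_succ x).mp hx
      obtain ⟨huy, hvy, wy, hwy, hRwy⟩ := (mem_BW_succ y).mp hy
      apply (mem_BW_succ _).mpr
      rw [lowPart_add, highPart_add]
      refine ⟨haddBW hux huy, haddBW hvx hvy, ⟨wx + wy, haddBW hwx hwy, ?_⟩⟩
      rw [Rmap_add, hRwx, hRwy]
      abel
    have hneg2 : ∀ {x : Esp (n + 2)}, x ∈ BW (n + 2) → -x ∈ BW (n + 2) := by
      intro x hx
      obtain ⟨hux, hvx, wx, hwx, hRwx⟩ := (mem_BW_succ x).mp hx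
      apply (mem_BW_succ _).mpr
      have hlneg : lowPart (-x) = -(lowPart x) := rfl
      have hhneg : highPart (-x) = -(highPart x) := rfl
      rw [hlneg, hhneg]
      refine ⟨hnegBW hux, hnegBW hvx, ⟨-wx, hnegBW hwx, ?_⟩⟩
      rw [Rmap_neg, hRwx]
      abel
    -- span = BW (n+2)
    have hspan2 : (Submodule.span ℤ (Set.range (bas (n + 2))) : Set (Esp (n + 2)))
        = BW (n + 2) := by
      apply Set.Subset.antisymm
      · intro x hx
        have : ∀ y ∈ Set.range (bas (n + 2)), y ∈ BW (n + 2) := by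
          rintro _ ⟨k, rfl⟩
          obtain ⟨s, rfl⟩ := (splitE (n + 1)).surjective k
          cases s with
          | inl j => rw [splitE_inl]; exact hgen1 j
          | inr j => rw [splitE_inr]; exact hgen2 j
        induction hx using Submodule.span_induction with
        | mem y hy => exact this y hy
        | zero => exact hzero2
        | add a b _ _ ha hb => exact hadd2 ha hb
        | smul z a _ ha =>
          induction z using Int.induction_on with
          | zero => simpa using hzero2
          | succ p ihp => rw [add_smul, one_smul]; exact hadd2 ihp ha
          | pred p ihp => rw [sub_smul, one_smul, sub_eq_add_neg]; exact hadd2 ihp (hneg2 ha)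
      · intro x hx
        obtain ⟨hu, hv, w, hw, hRw⟩ := (mem_BW_succ x).mp hx
        have huS : lowPart x ∈ S := (hmem _).mp hu
        have hwS : w ∈ S := (hmem _).mp hw
        have hxeq : x = T1 (n + 1) (lowPart x) + T2 (n + 1) w := by
          have h2 : -lowPart x + Rmap w = highPart x := by rw [hRw]; abel
          rw [T1_apply, T2_apply, ← glue_add, add_zero, h2, glue_lowPart_highPart]
        rw [hxeq]
        have hmap1 : T1 (n + 1) (lowPart x) ∈
            Submodule.span ℤ (Set.range (bas (n + 2))) := by
          have h1 : T1 (n + 1) (lowPart x) ∈ Submodule.map (T1 (n + 1)) S :=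
            Submodule.mem_map_of_mem huS
          rw [hS, Submodule.map_span] at h1
          refine Submodule.span_mono ?_ h1
          rintro _ ⟨_, ⟨j, rfl⟩, rfl⟩
          exact ⟨lowIdx j, by rw [bas_low, T1_apply]⟩
        have hmap2 : T2 (n + 1) w ∈ Submodule.span ℤ (Set.range (bas (n + 2))) := by
          have h1 : T2 (n + 1) w ∈ Submodule.map (T2 (n + 1)) S :=
            Submodule.mem_map_of_mem hwS
          rw [hS, Submodule.map_span] at h1
          refine Submodule.span_mono ?_ h1
          rintro _ ⟨_, ⟨j, rfl⟩, rfl⟩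
          exact ⟨highIdx j, by rw [bas_high, T2_apply]⟩
        exact Submodule.add_mem _ hmap1 hmap2
    -- linear independence
    have hind2 : LinearIndependent ℝ (bas (n + 2)) := by
      rw [Fintype.linearIndependent_iff]
      intro g hg
      rw [sum_split (fun k => g k • bas (n + 2) k)] at hg
      have hl1 : ∀ j, lowL (bas (n + 2) (lowIdx j)) = B j := fun j => by
        rw [bas_low]; exact lowPart_glue _ _
      have hl2 : ∀ j, lowL (bas (n + 2) (highIdx j)) = 0 := fun j => by
        rw [bas_high]; exact lowPart_glue _ _
      have hh1 : ∀ j, highL (bas (n + 2) (lowIdx j)) = -(B j) := fun j => by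
        rw [bas_low]; exact highPart_glue _ _
      have hh2 : ∀ j, highL (bas (n + 2) (highIdx j)) = Rmap (B j) := fun j => by
        rw [bas_high]; exact highPart_glue _ _
      have hglow := congrArg (lowL (m := n + 1)) hg
      rw [map_add, map_sum, map_sum, map_zero] at hglow
      simp only [LinearMap.map_smul, hl1, hl2, smul_zero, Finset.sum_const_zero, add_zero] at hglow
      have hlow0 : ∀ j, g (lowIdx j) = 0 :=
        Fintype.linearIndependent_iff.mp ihind (fun j => g (lowIdx j)) hglow
      have hghigh := congrArg (highL (m := n + 1)) hg
      rw [map_add, map_sum, map_sum, map_zero] at hghigh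
      simp only [LinearMap.map_smul, hh1, hh2] at hghigh
      rw [Finset.sum_eq_zero (fun j _ => by rw [hlow0 j, zero_smul]), zero_add] at hghigh
      have hsum : ∑ j, g (highIdx j) • Rmap (B j)
          = RmapL (n + 1) (∑ j, g (highIdx j) • B j) := by
        rw [map_sum]
        exact Finset.sum_congr rfl fun j _ => by rw [LinearMap.map_smul]; rfl
      rw [hsum] at hghigh
      have hzero : (∑ j, g (highIdx j) • B j) = 0 :=
        Rmap_injective (by omega : 1 ≤ n + 1) hghigh
      have hhigh0 : ∀ j, g (highIdx j) = 0 :=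
        Fintype.linearIndependent_iff.mp ihind (fun j => g (highIdx j)) hzero
      intro k
      obtain ⟨s, rfl⟩ := (splitE (n + 1)).surjective k
      cases s with
      | inl j => rw [splitE_inl]; exact hlow0 j
      | inr j => rw [splitE_inr]; exact hhigh0 j
    -- minimum distance
    have hleast2 : IsLeast {d : ℝ | ∃ x ∈ BW (n + 2), x ≠ 0 ∧ Qf x = d}
        ((2 : ℝ) ^ (n + 1)) := by
      have hlb : ∀ y ∈ BW (n + 1), y ≠ 0 → (2 : ℝ) ^ n ≤ Qf y := fun y hy hyne =>
        ihleast.2 ⟨y, hy, hyne, rfl⟩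
      constructor
      · obtain ⟨x₀, hx₀, hx₀ne, hQx₀⟩ := ihleast.1
        refine ⟨glue x₀ (-x₀), ?_, ?_, ?_⟩
        · apply (mem_BW_succ _).mpr
          rw [lowPart_glue, highPart_glue]
          exact ⟨hx₀, hnegBW hx₀, ⟨0, h0BW, by rw [Rmap_zero, add_neg_cancel]⟩⟩
        · intro h
          apply hx₀ne
          have := congrArg lowPart h
          rw [lowPart_glue] at this
          exact this
        · rw [Qf_glue, Qf_neg, hQx₀, pow_succ]
          ring
      · rintro d ⟨x, hx, hxne, rfl⟩
        obtain ⟨hu, hv, w, hw, hRw⟩ := (mem_BW_succ x).mp hx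
        have hQ : Qf x = Qf (lowPart x) + Qf (highPart x) := by
          conv_lhs => rw [← glue_lowPart_highPart x]
          rw [Qf_glue]
        have hp2 : (2:ℝ) ^ (n + 1) = 2 ^ n + 2 ^ n := by rw [pow_succ]; ring
        by_cases hu0 : lowPart x = 0
        · have hv0 : highPart x ≠ 0 := by
            intro hv0
            apply hxne
            rw [← glue_lowPart_highPart x, hu0, hv0, glue_zero]
          have hw0 : w ≠ 0 := by
            intro hw0
            apply hv0
            have : Rmap w = lowPart x + highPart x := hRw
            rw [hw0, Rmap_zero, hu0, zero_add] at this
            exact this.symm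
          have hQv : Qf (highPart x) = 2 * Qf w := by
            have : highPart x = Rmap w := by rw [hRw, hu0, zero_add]
            rw [this, Qf_Rmap (by omega : 1 ≤ n + 1)]
          have h1 : (2:ℝ) ^ n ≤ Qf w := hlb w hw hw0
          have h2 : Qf (lowPart x) = 0 := (Qf_eq_zero_iff _).mpr hu0
          rw [hQ, h2, hQv, hp2]
          linarith
        · by_cases hv0 : highPart x = 0
          · have hw0 : w ≠ 0 := by
              intro hw0
              apply hu0
              have : Rmap w = lowPart x + highPart x := hRw
              rw [hw0, Rmap_zero, hv0, add_zero] at this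
              exact this.symm
            have hQu : Qf (lowPart x) = 2 * Qf w := by
              have : lowPart x = Rmap w := by rw [hRw, hv0, add_zero]
              rw [this, Qf_Rmap (by omega : 1 ≤ n + 1)]
            have h1 : (2:ℝ) ^ n ≤ Qf w := hlb w hw hw0
            have h2 : Qf (highPart x) = 0 := (Qf_eq_zero_iff _).mpr hv0
            rw [hQ, h2, hQu, hp2]
            linarith
          · have h1 : (2:ℝ) ^ n ≤ Qf (lowPart x) := hlb _ hu hu0
            have h2 : (2:ℝ) ^ n ≤ Qf (highPart x) := hlb _ hv hv0
            rw [hQ, hp2]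
            linarith
    -- determinant
    have hdet2 : |(stdB (n + 2)).det (bas (n + 2))| = 2 ^ ((n + 1) * 2 ^ n) := by
      rw [stdB_det_eq]
      rw [famMat_comb_det (bas (n + 2)) B (fun _ => 0) (fun j => -(B j))
        (fun j => Rmap (B j)) (fun j => by rw [bas_low]) (fun j => by rw [bas_high])]
      have hz : famMat (fun _ : Fin (2 ^ (n + 1)) => (0 : Esp (n + 1))) = 0 := by
        ext i j; rfl
      rw [hz, Matrix.det_fromBlocks_zero₁₂, famMat_det_Rmap, rdet_val n]
      rw [abs_mul, abs_mul, ← stdB_det_eq, ihdet]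
      rw [abs_of_nonneg (by positivity : (0:ℝ) ≤ (2:ℝ) ^ (2 ^ n))]
      rw [← pow_add, ← pow_add, exp_arith n]
    exact ⟨hspan2, hind2, hRnew, hleast2, by
      simpa using hdet2⟩

/-- Barnes–Wall lattices (in dimension `n = 2^m`, `m ≥ 1`): (a) `R(BW_n) ⊆ BW_n`;
(b) the minimum distance is `d(BW_n) = n/2`; (c) `BW_n` is a full-rank lattice with
fundamental coding gain `γ(BW_n) = d(BW_n)/vol(BW_n)^(2/n) = √(n/2)`. -/
theorem stmt_18 (m : ℕ) (hm : 1 ≤ m) :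
    (∀ x ∈ BW m, Rmap x ∈ BW m) ∧
    IsLeast {d : ℝ | ∃ x ∈ BW m, x ≠ (0 : EuclideanSpace ℝ (Fin (2 ^ m))) ∧ ‖x‖ ^ 2 = d}
      (((2 ^ m : ℕ) : ℝ) / 2) ∧
    (∃ G : Submodule ℤ (EuclideanSpace ℝ (Fin (2 ^ m))),
      (G : Set (EuclideanSpace ℝ (Fin (2 ^ m)))) = BW m ∧
      ∃ _ : DiscreteTopology G, IsZLattice ℝ G ∧
        (((2 ^ m : ℕ) : ℝ) / 2) /
            ZLattice.covolume G volume ^ ((2 : ℝ) / ((2 ^ m : ℕ) : ℝ)) =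
          Real.sqrt (((2 ^ m : ℕ) : ℝ) / 2)) := by
  obtain ⟨k, rfl⟩ : ∃ k, m = k + 1 := ⟨m - 1, by omega⟩
  obtain ⟨hspan, hind, hR, hleast, hdet⟩ := bigIH k
  have hcard : Fintype.card (Fin (2 ^ (k + 1))) = Module.finrank ℝ (Esp (k + 1)) := by
    simp [finrank_euclideanSpace]
  let bR : Module.Basis (Fin (2 ^ (k + 1))) ℝ (Esp (k + 1)) :=
    basisOfLinearIndependentOfCardEqFinrank hind hcard
  have hbR : ⇑bR = bas (k + 1) := coe_basisOfLinearIndependentOfCardEqFinrank hind hcard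
  have hGset : ((Submodule.span ℤ (Set.range ⇑bR) : Submodule ℤ (Esp (k + 1))) :
      Set (Esp (k + 1))) = BW (k + 1) := by
    rw [hbR]; exact hspan
  have hdisc : DiscreteTopology (Submodule.span ℤ (Set.range ⇑bR)) := inferInstance
  have hlat : IsZLattice ℝ (Submodule.span ℤ (Set.range ⇑bR)) := inferInstance
  have h2k : ((2 ^ (k + 1) : ℕ) : ℝ) / 2 = (2 : ℝ) ^ k := by
    push_cast
    rw [pow_succ]
    ring
  refine ⟨hR, ?_, Submodule.span ℤ (Set.range ⇑bR), hGset, hdisc, hlat, ?_⟩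
  · have hsets : {d : ℝ | ∃ x ∈ BW (k + 1), x ≠ 0 ∧ ‖x‖ ^ 2 = d}
        = {d : ℝ | ∃ x ∈ BW (k + 1), x ≠ 0 ∧ Qf x = d} := by
      ext d
      constructor
      · rintro ⟨x, h1, h2, rfl⟩
        exact ⟨x, h1, h2, (norm_sq_eq_Qf x).symm⟩
      · rintro ⟨x, h1, h2, rfl⟩
        exact ⟨x, h1, h2, norm_sq_eq_Qf x⟩
    rw [hsets, h2k]
    exact hleast
  · have hcov : ZLattice.covolume (Submodule.span ℤ (Set.range ⇑bR)) volume
        = |(stdB (k + 1)).det (bas (k + 1))| := by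
      rw [ZLattice.covolume_eq_measure_fundamentalDomain _ volume
        (ZSpan.isAddFundamentalDomain bR volume)]
      rw [measureReal_def, ZSpan.measure_fundamentalDomain bR volume (stdB (k + 1))]
      have hpar : volume (ZSpan.fundamentalDomain (stdB (k + 1))) = 1 := by
        rw [measure_congr (ZSpan.fundamentalDomain_ae_parallelepiped (stdB (k + 1)) volume)]
        rw [stdB, OrthonormalBasis.coe_toBasis]
        exact (EuclideanSpace.basisFun (Fin (2 ^ (k + 1))) ℝ).volume_parallelepiped
      rw [hpar, mul_one, ENNReal.toReal_ofReal (abs_nonneg _), hbR]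
    rw [hcov, hdet, h2k]
    have ha : ((2 : ℝ) ^ (k * 2 ^ (k - 1))) ^ ((2 : ℝ) / ((2 ^ (k + 1) : ℕ) : ℝ))
        = (2 : ℝ) ^ ((k : ℝ) / 2) := by
      have hc : ((2 ^ (k + 1) : ℕ) : ℝ) = (2 : ℝ) ^ (k + 1) := by push_cast; ring
      rw [hc, ← Real.rpow_natCast 2 (k * 2 ^ (k - 1)),
        ← Real.rpow_mul (by norm_num : (0:ℝ) ≤ 2)]
      congr 1
      rcases k with _ | s
      · norm_num
      · have h4 : (2 : ℝ) ^ (s + 1 + 1) = 2 ^ s * 4 := by rw [pow_succ, pow_succ]; ring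
        push_cast [h4]
        have h2s : (0 : ℝ) < 2 ^ s := by positivity
        field_simp
        ring
    rw [ha]
    have hsqrt : Real.sqrt ((2 : ℝ) ^ k) = (2 : ℝ) ^ ((k : ℝ) / 2) := by
      rw [Real.sqrt_eq_rpow, ← Real.rpow_natCast 2 k,
        ← Real.rpow_mul (by norm_num : (0:ℝ) ≤ 2)]
      congr 1
      ring
    rw [hsqrt, ← Real.rpow_natCast 2 k,
      ← Real.rpow_sub (by norm_num : (0:ℝ) < 2)]
    congr 1
    ring
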